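/- Let K and L be regular languages over a finite alphabet Σ with state complexities κ(K) = m and κ(L) = n. Then the state complexity of the shuffle K ⧢ L is at most f(m,n) = 2^{mn−1} + 2^{(m−1)(n−1)}(2^{m−1} − 1)(2^{n−1} − 1). -/

import Mathlib

/-- `IsShuffleOf u v w` means that the word `w` is a shuffle (interleaving)
of the words `u` and `v`. -/
inductive IsShuffleOf {α : Type*} : List α → List α → List α → Prop
  | nil : IsShuffleOf [] [] []
  | left {a : α} {u v w : List α} : IsShuffleOf u v w → IsShuffleOf (a :: u) v (a :: w)
  | right {a : α} {u v w : List α} : IsShuffleOf u v w → IsShuffleOf u (a :: v) (a :: w)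

/-- The shuffle `K ⧢ L` of two languages. -/
def shuffleLang {α : Type*} (K L : Language α) : Language α :=
  {w | ∃ u ∈ K, ∃ v ∈ L, IsShuffleOf u v w}

/-- The shuffle NFA `𝒩` built from two complete DFAs `𝒦` and `ℒ`. -/
def shuffleNFA {α σK σL : Type*} (K : DFA α σK) (L : DFA α σL) : NFA α (σK × σL) where
  step := fun pq a => {(K.step pq.1 a, pq.2), (pq.1, L.step pq.2 a)}
  start := {(K.start, L.start)}
  accept := {pq | pq.1 ∈ K.accept ∧ pq.2 ∈ L.accept}

section aux
variable {α : Type*}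

theorem isShuffleOf_nil_left : ∀ v : List α, IsShuffleOf [] v v
  | [] => .nil
  | _ :: v => .right (isShuffleOf_nil_left v)

theorem IsShuffleOf.eq_nil {u v : List α} (h : IsShuffleOf u v []) : u = [] ∧ v = [] := by
  cases h; exact ⟨rfl, rfl⟩

theorem NFA.stepSet_union' {σ : Type*} (N : NFA α σ) (S T : Set σ) (a : α) :
    N.stepSet (S ∪ T) a = N.stepSet S a ∪ N.stepSet T a := by
  ext x
  simp only [NFA.mem_stepSet, Set.mem_union]
  constructor
  · rintro ⟨t, (h | h), hx⟩
    exacts [Or.inl ⟨t, h, hx⟩, Or.inr ⟨t, h, hx⟩]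
  · rintro (⟨t, h, hx⟩ | ⟨t, h, hx⟩)
    exacts [⟨t, Or.inl h, hx⟩, ⟨t, Or.inr h, hx⟩]

theorem NFA.evalFrom_union' {σ : Type*} (N : NFA α σ) (S T : Set σ) (w : List α) :
    N.evalFrom (S ∪ T) w = N.evalFrom S w ∪ N.evalFrom T w := by
  induction w generalizing S T with
  | nil => rfl
  | cons a w ih =>
      show N.evalFrom (N.stepSet (S ∪ T) a) w = _
      rw [N.stepSet_union', ih]; rfl

theorem shuffle_evalFrom {σK σL : Type*} (MK : DFA α σK) (ML : DFA α σL) (w : List α)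
    (pK p : σK) (pL q : σL) :
    (p, q) ∈ (shuffleNFA MK ML).evalFrom {(pK, pL)} w ↔
      ∃ u v, IsShuffleOf u v w ∧ MK.evalFrom pK u = p ∧ ML.evalFrom pL v = q := by
  induction w generalizing pK pL with
  | nil =>
      simp only [NFA.evalFrom_nil, Set.mem_singleton_iff, Prod.mk.injEq]
      constructor
      · rintro ⟨rfl, rfl⟩; exact ⟨[], [], .nil, rfl, rfl⟩
      · rintro ⟨u, v, h, hu, hv⟩
        obtain ⟨rfl, rfl⟩ := h.eq_nil
        exact ⟨hu.symm ▸ rfl, hv.symm ▸ rfl⟩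
  | cons a w ih =>
      have hss : (shuffleNFA MK ML).stepSet {(pK, pL)} a =
          {(MK.step pK a, pL)} ∪ {(pK, ML.step pL a)} := by
        ext x
        simp only [NFA.mem_stepSet, Set.mem_singleton_iff, Set.mem_union]
        constructor
        · rintro ⟨t, rfl, hx⟩
          rcases hx with h | h
          exacts [Or.inl h, Or.inr h]
        · rintro (rfl | rfl)
          exacts [⟨_, rfl, Or.inl rfl⟩, ⟨_, rfl, Or.inr rfl⟩]
      have : (shuffleNFA MK ML).evalFrom {(pK, pL)} (a :: w)
          = (shuffleNFA MK ML).evalFrom ({(MK.step pK a, pL)} ∪ {(pK, ML.step pL a)}) w := by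
        show (shuffleNFA MK ML).evalFrom ((shuffleNFA MK ML).stepSet {(pK, pL)} a) w = _
        rw [hss]
      rw [this, NFA.evalFrom_union']
      constructor
      · rintro (h | h)
        · obtain ⟨u, v, hs, hu, hv⟩ := (ih _ _).mp h
          exact ⟨a :: u, v, .left hs, hu, hv⟩
        · obtain ⟨u, v, hs, hu, hv⟩ := (ih _ _).mp h
          exact ⟨u, a :: v, .right hs, hu, hv⟩
      · rintro ⟨u, v, hs, hu, hv⟩
        cases hs with
        | left hs' => exact Or.inl ((ih _ _).mpr ⟨_, _, hs', hu, hv⟩)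
        | right hs' => exact Or.inr ((ih _ _).mpr ⟨_, _, hs', hu, hv⟩)

theorem shuffleNFA_accepts {σK σL : Type*} (MK : DFA α σK) (ML : DFA α σL) :
    (shuffleNFA MK ML).accepts = shuffleLang MK.accepts ML.accepts := by
  ext w
  rw [NFA.mem_accepts]
  constructor
  · rintro ⟨⟨p, q⟩, ⟨hp, hq⟩, hmem⟩
    obtain ⟨u, v, hs, hu, hv⟩ := (shuffle_evalFrom MK ML w _ _ _ _).mp hmem
    exact ⟨u, by rwa [DFA.mem_accepts, DFA.eval, hu], v, by rwa [DFA.mem_accepts, DFA.eval, hv], hs⟩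
  · rintro ⟨u, hu, v, hv, hs⟩
    exact ⟨(MK.eval u, ML.eval v), ⟨hu, hv⟩,
      (shuffle_evalFrom MK ML w _ _ _ _).mpr ⟨u, v, hs, rfl, rfl⟩⟩

end aux
section restrict
variable {α : Type*} {σ : Type*}

/-- Restrict a DFA to a step-invariant set of states containing the start state. -/
def DFA.restrict (M : DFA α σ) (P : σ → Prop) (h0 : P M.start)
    (hstep : ∀ s a, P s → P (M.step s a)) : DFA α {s // P s} where
  step := fun s a => ⟨M.step s.1 a, hstep s.1 a s.2⟩
  start := ⟨M.start, h0⟩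
  accept := {s | s.1 ∈ M.accept}

theorem DFA.restrict_evalFrom (M : DFA α σ) (P : σ → Prop) (h0 : P M.start)
    (hstep : ∀ s a, P s → P (M.step s a)) (s : {s // P s}) (w : List α) :
    ((M.restrict P h0 hstep).evalFrom s w).1 = M.evalFrom s.1 w := by
  induction w generalizing s with
  | nil => rfl
  | cons a w ih => exact ih _

theorem DFA.restrict_accepts (M : DFA α σ) (P : σ → Prop) (h0 : P M.start)
    (hstep : ∀ s a, P s → P (M.step s a)) :
    (M.restrict P h0 hstep).accepts = M.accepts := by
  ext w
  rw [DFA.mem_accepts, DFA.mem_accepts]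
  show ((M.restrict P h0 hstep).eval w).1 ∈ M.accept ↔ _
  rw [DFA.eval, DFA.restrict_evalFrom]
  rfl

end restrict
theorem count_le {σK σL : Type*} [Fintype σK] [Fintype σL] (p₀ : σK) (q₀ : σL)
    [Fintype {S : Set (σK × σL) // (∃ q, (p₀, q) ∈ S) ∧ (∃ p, (p, q₀) ∈ S)}]
    {m n : ℕ} (hm : Fintype.card σK = m) (hn : Fintype.card σL = n) :
    Fintype.card {S : Set (σK × σL) // (∃ q, (p₀, q) ∈ S) ∧ (∃ p, (p, q₀) ∈ S)} ≤
      2 ^ (m * n - 1) +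
        2 ^ ((m - 1) * (n - 1)) * (2 ^ (m - 1) - 1) * (2 ^ (n - 1) - 1) := by
  classical
  set τ := σK × σL
  set z : τ := (p₀, q₀) with hz
  set P : Set τ → Prop := fun S => (∃ q, (p₀, q) ∈ S) ∧ (∃ p, (p, q₀) ∈ S) with hP
  -- split according to membership of z
  have hsplit : Fintype.card {S : Set τ // P S} ≤
      Fintype.card {x : {S : Set τ // P S} // z ∈ x.1} +
        Fintype.card {x : {S : Set τ // P S} // ¬ (z ∈ x.1)} := by
    have h1 := Fintype.card_subtype_compl (α := {S : Set τ // P S}) (fun x => z ∈ x.1)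
    have h2 := Fintype.card_subtype_le (fun x : {S : Set τ // P S} => z ∈ x.1)
    omega
  -- first summand
  have hA : Fintype.card {x : {S : Set τ // P S} // z ∈ x.1} ≤ 2 ^ (m * n - 1) := by
    have hinj : Function.Injective
        (fun x : {x : {S : Set τ // P S} // z ∈ x.1} =>
          ({y | y.1 ∈ x.1.1} : Set {y : τ // ¬ (y = z)})) := by
      intro x x' h
      ext y
      by_cases hy : y = z
      · subst hy; exact iff_of_true x.2 x'.2
      · have := Set.ext_iff.mp h ⟨y, hy⟩
        exact this
    have := Fintype.card_le_of_injective _ hinj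
    have hcard : Fintype.card (Set {y : τ // ¬ (y = z)}) = 2 ^ (m * n - 1) := by
      rw [Fintype.card_set, Fintype.card_subtype_compl, Fintype.card_subtype_eq,
        Fintype.card_prod, hm, hn]
    omega
  -- second summand
  have hB : Fintype.card {x : {S : Set τ // P S} // ¬ (z ∈ x.1)} ≤
      2 ^ ((m - 1) * (n - 1)) * (2 ^ (m - 1) - 1) * (2 ^ (n - 1) - 1) := by
    set Dt := {y : τ // ¬ (y.1 = p₀) ∧ ¬ (y.2 = q₀)}
    set Rt := {y : τ // y.1 = p₀ ∧ ¬ (y.2 = q₀)}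
    set Ct := {y : τ // ¬ (y.1 = p₀) ∧ y.2 = q₀}
    have key : ∀ x : {x : {S : Set τ // P S} // ¬ (z ∈ x.1)},
        ¬ (({y | y.1 ∈ x.1.1} : Set Rt) = ∅) ∧ ¬ (({y | y.1 ∈ x.1.1} : Set Ct) = ∅) := by
      intro x
      obtain ⟨⟨q, hq⟩, ⟨p, hp⟩⟩ := x.1.2
      constructor
      · have hq' : ¬ (q = q₀) := fun h => x.2 (by subst h; exact hq)
        exact Set.nonempty_iff_ne_empty.mp ⟨⟨(p₀, q), rfl, hq'⟩, hq⟩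
      · have hp' : ¬ (p = p₀) := fun h => x.2 (by subst h; exact hp)
        exact Set.nonempty_iff_ne_empty.mp ⟨⟨(p, q₀), hp', rfl⟩, hp⟩
    have hinj : Function.Injective
        (fun x : {x : {S : Set τ // P S} // ¬ (z ∈ x.1)} =>
          ((({y | y.1 ∈ x.1.1} : Set Dt),
            (⟨{y | y.1 ∈ x.1.1}, (key x).1⟩ : {s : Set Rt // ¬ (s = ∅)}),
            (⟨{y | y.1 ∈ x.1.1}, (key x).2⟩ : {s : Set Ct // ¬ (s = ∅)})) :
            Set Dt × {s : Set Rt // ¬ (s = ∅)} × {s : Set Ct // ¬ (s = ∅)})) := by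
      intro x x' h
      have hD := congrArg Prod.fst h
      have hR' := congrArg (fun t : Set Dt × {s : Set Rt // ¬ (s = ∅)} ×
        {s : Set Ct // ¬ (s = ∅)} => (t.2.1.1 : Set Rt)) h
      have hC' := congrArg (fun t : Set Dt × {s : Set Rt // ¬ (s = ∅)} ×
        {s : Set Ct // ¬ (s = ∅)} => (t.2.2.1 : Set Ct)) h
      ext y
      by_cases ha : y.1 = p₀ <;> by_cases hb : y.2 = q₀
      · have : y = z := Prod.ext ha hb
        subst this
        exact iff_of_false x.2 x'.2
      · exact Set.ext_iff.mp hR' ⟨y, ha, hb⟩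
      · exact Set.ext_iff.mp hC' ⟨y, ha, hb⟩
      · exact Set.ext_iff.mp hD ⟨y, ha, hb⟩
    have hle := Fintype.card_le_of_injective _ hinj
    have hcDt : Fintype.card Dt = (m - 1) * (n - 1) := by
      rw [Fintype.card_congr (Equiv.subtypeProdEquivProd (p := fun a => ¬ (a = p₀))
        (q := fun b => ¬ (b = q₀))), Fintype.card_prod,
        Fintype.card_subtype_compl, Fintype.card_subtype_eq,
        Fintype.card_subtype_compl, Fintype.card_subtype_eq, hm, hn]
    have hcRt : Fintype.card Rt = n - 1 := by
      rw [Fintype.card_congr (Equiv.subtypeProdEquivProd (p := fun a => a = p₀)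
        (q := fun b => ¬ (b = q₀))), Fintype.card_prod,
        Fintype.card_subtype_eq, Fintype.card_subtype_compl, Fintype.card_subtype_eq,
        hn, one_mul]
    have hcCt : Fintype.card Ct = m - 1 := by
      rw [Fintype.card_congr (Equiv.subtypeProdEquivProd (p := fun a => ¬ (a = p₀))
        (q := fun b => b = q₀)), Fintype.card_prod,
        Fintype.card_subtype_compl, Fintype.card_subtype_eq, Fintype.card_subtype_eq,
        hm, mul_one]
    have hcard : Fintype.card (Set Dt × {s : Set Rt // ¬ (s = ∅)} × {s : Set Ct // ¬ (s = ∅)})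
        = 2 ^ ((m - 1) * (n - 1)) * ((2 ^ (n - 1) - 1) * (2 ^ (m - 1) - 1)) := by
      rw [Fintype.card_prod, Fintype.card_prod, Fintype.card_set, hcDt,
        Fintype.card_subtype_compl, Fintype.card_subtype_eq, Fintype.card_set, hcRt,
        Fintype.card_subtype_compl, Fintype.card_subtype_eq, Fintype.card_set, hcCt]
    rw [hcard] at hle
    calc Fintype.card {x : {S : Set τ // P S} // ¬ (z ∈ x.1)}
        ≤ 2 ^ ((m - 1) * (n - 1)) * ((2 ^ (n - 1) - 1) * (2 ^ (m - 1) - 1)) := hle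
      _ = 2 ^ ((m - 1) * (n - 1)) * (2 ^ (m - 1) - 1) * (2 ^ (n - 1) - 1) := by ring
  have hgoal : Fintype.card {S : Set τ // P S} ≤ 2 ^ (m * n - 1) +
      2 ^ ((m - 1) * (n - 1)) * (2 ^ (m - 1) - 1) * (2 ^ (n - 1) - 1) := by omega
  convert hgoal using 2

/-- `IsStateComplexity L m` says the minimal complete DFA recognizing `L`
has exactly `m` states. -/
def IsStateComplexity {α : Type*} (L : Language α) (m : ℕ) : Prop :=
  (∃ (σ : Type) (_ : Fintype σ) (M : DFA α σ), M.accepts = L ∧ Fintype.card σ = m) ∧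
  (∀ (σ : Type) (_ : Fintype σ) (M : DFA α σ), M.accepts = L → m ≤ Fintype.card σ)

/-- Upper bound for shuffle: if `κ(K) = m` and `κ(L) = n`, then the state complexity
of `K ⧢ L` is at most `f(m,n) = 2^(mn-1) + 2^((m-1)(n-1)) (2^(m-1)-1)(2^(n-1)-1)`. -/
theorem stmt_4 {α : Type*} [Fintype α] (K L : Language α) (m n : ℕ)
    (hK : IsStateComplexity K m) (hL : IsStateComplexity L n) :
    ∃ k : ℕ, IsStateComplexity (shuffleLang K L) k ∧
      k ≤ 2 ^ (m * n - 1) +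
            2 ^ ((m - 1) * (n - 1)) * (2 ^ (m - 1) - 1) * (2 ^ (n - 1) - 1) := by
  classical
  obtain ⟨⟨σK, iK, MK, hMK, hcK⟩, -⟩ := hK
  obtain ⟨⟨σL, iL, ML, hML, hcL⟩, -⟩ := hL
  set N := shuffleNFA MK ML with hN
  set P : Set (σK × σL) → Prop :=
    fun S => (∃ q, (MK.start, q) ∈ S) ∧ (∃ p, (p, ML.start) ∈ S) with hPdef
  have h0 : P N.toDFA.start := ⟨⟨ML.start, rfl⟩, ⟨MK.start, rfl⟩⟩
  have hstep : ∀ S a, P S → P (N.toDFA.step S a) := by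
    rintro S a ⟨⟨q, hq⟩, ⟨p, hp⟩⟩
    constructor
    · exact ⟨ML.step q a,
        N.mem_stepSet.mpr ⟨(MK.start, q), hq, Set.mem_insert_iff.mpr (Or.inr rfl)⟩⟩
    · exact ⟨MK.step p a,
        N.mem_stepSet.mpr ⟨(p, ML.start), hp, Set.mem_insert _ _⟩⟩
  set D := N.toDFA.restrict P h0 hstep with hD
  have hacc : D.accepts = shuffleLang K L := by
    rw [hD, DFA.restrict_accepts, NFA.toDFA_correct, hN, shuffleNFA_accepts, hMK, hML]
  have hmem : (Fintype.card {S : Set (σK × σL) // P S}) ∈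
      {c | ∃ (σ : Type) (_ : Fintype σ) (M : DFA α σ),
        M.accepts = shuffleLang K L ∧ Fintype.card σ = c} :=
    ⟨{S : Set (σK × σL) // P S}, inferInstance, D, hacc, rfl⟩
  refine ⟨sInf {c | ∃ (σ : Type) (_ : Fintype σ) (M : DFA α σ),
      M.accepts = shuffleLang K L ∧ Fintype.card σ = c}, ⟨?_, ?_⟩, ?_⟩
  · exact Nat.sInf_mem ⟨_, hmem⟩
  · intro σ i M hM
    exact Nat.sInf_le ⟨σ, i, M, hM, rfl⟩
  · refine le_trans (Nat.sInf_le hmem) ?_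
    have := count_le MK.start ML.start (m := m) (n := n) hcK hcL
    convert this using 2
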